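/- Uniqueness of generators from the column space: let A ∈ ℂ^{K×L} be Vandermonde with distinct generators z_1,...,z_L and K ≥ L + 1. If a nonzero vector v ∈ ℂ^{K} lies in the column space of A and satisfies the shift relation v(2:K) = z · v(1:K-1) for some z ∈ ℂ, then z ∈ {z_1,...,z_L} and v is a scalar multiple of the corresponding Vandermonde column. -/
import Mathlib

/-- Uniqueness of generators from the column space: if a nonzero `v ∈ ℂ^K` lies
in the column space of a `K×L` Vandermonde matrix with pairwise distinct nonzero
generators, `K ≥ L + 1`, and satisfies the shift relation `v(2:K) = ζ v(1:K-1)`,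
then `ζ` is one of the generators and `v` is a scalar multiple of the
corresponding Vandermonde column. -/
theorem generator_uniqueness (K L : ℕ) (hKL : L + 1 ≤ K)
    (z : Fin L → ℂ) (hz : Function.Injective z) (hz0 : ∀ l, z l ≠ 0)
    (v : Fin K → ℂ) (hv : v ≠ 0)
    (hcol : ∃ w : Fin L → ℂ,
      v = (Matrix.of fun (i : Fin K) (l : Fin L) => z l ^ (i : ℕ)).mulVec w)
    (ζ : ℂ)
    (hshift : ∀ i : ℕ, ∀ h : i + 1 < K,
      v ⟨i + 1, h⟩ = ζ * v ⟨i, by omega⟩) :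
    ∃ l : Fin L, ζ = z l ∧ ∃ c : ℂ, ∀ i : Fin K, v i = c * z l ^ (i : ℕ) := by
  have hK0 : 0 < K := by omega
  set v0 : ℂ := v ⟨0, hK0⟩ with hv0def
  -- v i = v0 * ζ ^ i
  have hgeo : ∀ i : ℕ, ∀ h : i < K, v ⟨i, h⟩ = v0 * ζ ^ i := by
    intro i
    induction i with
    | zero => intro h; simp [hv0def]
    | succ n ih =>
      intro h
      rw [hshift n h, ih (by omega)]
      ring
  -- v0 ≠ 0
  have hv0 : v0 ≠ 0 := by
    intro h0
    apply hv
    funext i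
    have := hgeo i.val i.isLt
    simp only [Fin.eta] at this
    rw [this, h0, zero_mul, Pi.zero_apply]
  obtain ⟨w, hw⟩ := hcol
  have hwv : ∀ i : ℕ, ∀ h : i < K, (∑ l, w l * z l ^ i) = v0 * ζ ^ i := by
    intro i h
    have := congrFun hw ⟨i, h⟩
    rw [hgeo i h] at this
    rw [this]
    simp [Matrix.mulVec, dotProduct, mul_comm]
  -- ζ is one of the generators
  have hζ : ∃ l, ζ = z l := by
    by_contra hno
    push_neg at hno
    set t : Fin (L + 1) → ℂ := Fin.cons ζ z with ht
    have htinj : Function.Injective t := by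
      rw [ht, Fin.cons_injective_iff]
      refine ⟨?_, hz⟩
      rintro ⟨l, hl⟩
      exact hno l hl.symm
    set c : Fin (L + 1) → ℂ := Fin.cons (-v0) w with hc
    have hzero : c = 0 := by
      apply Matrix.eq_zero_of_forall_pow_sum_mul_pow_eq_zero htinj
      intro i
      have hiK : (i : ℕ) < K := by omega
      have hsum : (∑ j : Fin (L + 1), c j * t j ^ (i : ℕ))
          = (-v0) * ζ ^ (i : ℕ) + (∑ l : Fin L, w l * z l ^ (i : ℕ)) := by
        rw [Fin.sum_univ_succ]
        simp [hc, ht]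
      rw [hsum, hwv i hiK]
      ring
    have := congrFun hzero 0
    simp [hc] at this
    exact hv0 this
  obtain ⟨l, hl⟩ := hζ
  refine ⟨l, hl, v0, fun i => ?_⟩
  have := hgeo i.val i.isLt
  simp only [Fin.eta] at this
  rw [this, hl]
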